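/- arXiv:1708.01384 — 2 statements merged into one kernel-verified Lean document; each statement's English description precedes it below -/
import Mathlib

section
/- Let A be a symmetric doubly stochastic K×K matrix with λ₂(A) < 1, let V be the PSD square root of (I-A)/(2K), let Ā = (I+A)/2, and let J₁,...,J_K : ℝ^M → ℝ be differentiable convex functions whose (weighted) sum J(w) = Σ_k q_k J_k(w) is strictly convex with minimizer w*. Suppose (W*, Y*) with Y* in the range of 𝒱 = V⊗I_M satisfies μ(Ā⊗I_M)∇𝒥(W*) + K𝒱Y* = 0 and 𝒱W* = 0 (with appropriate scaling q_k = 1/K and ∇𝒥(W) the stacked gradients). Then all K blocks of W* equal a common vector w⁰, and w⁰ satisfies Σ_k ∇J_k(w⁰) = 0, i.e., w⁰ = w*. -/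
open Matrix
open scoped BigOperators

open Filter Set in
lemma convexOn_isMinOn_of_hasFDerivAt_zero {E : Type*} [NormedAddCommGroup E] [NormedSpace ℝ E]
    {f : E → ℝ} {x : E} (hc : ConvexOn ℝ Set.univ f)
    (hd : HasFDerivAt f (0 : E →L[ℝ] ℝ) x) : IsMinOn f Set.univ x := by
  rw [isMinOn_iff]
  intro y _
  set φ : ℝ → ℝ := fun t => f (x + t • (y - x)) with hφdef
  have hg : HasDerivAt (fun t : ℝ => x + t • (y - x)) (y - x) 0 := by
    simpa using ((hasDerivAt_id (0 : ℝ)).smul_const (y - x)).const_add x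
  have hd' : HasFDerivAt f (0 : E →L[ℝ] ℝ) ((fun t : ℝ => x + t • (y - x)) 0) := by
    simpa using hd
  have hφ : HasDerivAt φ 0 0 := by
    have h := hd'.comp_hasDerivAt 0 hg
    simp only [ContinuousLinearMap.zero_apply] at h
    exact h
  have key : Tendsto (slope φ 0) (nhdsWithin 0 (Set.Ioi 0)) (nhds 0) :=
    (hasDerivAt_iff_tendsto_slope.mp hφ).mono_left
      (nhdsWithin_mono 0 fun t ht => Set.mem_compl_singleton_iff.mpr (ne_of_gt ht))
  have hb : ∀ᶠ t in nhdsWithin 0 (Set.Ioi 0), slope φ 0 t ≤ f y - f x := by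
    filter_upwards [Ioo_mem_nhdsGT_of_mem (by norm_num : (0:ℝ) ∈ Set.Ico 0 1)] with t ht
    have h2 := hc.2 (Set.mem_univ x) (Set.mem_univ y)
      (by linarith [ht.2] : (0:ℝ) ≤ 1 - t) (le_of_lt ht.1) (by ring)
    have h3 : (1 - t) • x + t • y = x + t • (y - x) := by module
    rw [h3] at h2
    have hφt : φ t ≤ (1 - t) * f x + t * f y := by simpa [hφdef, smul_eq_mul] using h2
    have hφ0 : φ 0 = f x := by simp [hφdef]
    rw [slope_def_field]
    rw [sub_zero, div_le_iff₀ ht.1, hφ0]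
    nlinarith
  have h0 : (0:ℝ) ≤ f y - f x := le_of_tendsto key hb
  linarith

/-- Fixed points of the primal-dual (exact diffusion) recursion are consensual and optimal:
if `𝒱W* = 0` and `μ Ā ∇𝒥(W*) + K 𝒱 Y* = 0` with `Y*` in the range of `𝒱`, where `V` is
the PSD square root of `(I-A)/(2K)` for a symmetric doubly stochastic `A` with
`λ₂(A) < 1` and `Ā = (I+A)/2`, then all blocks of `W*` agree with a common vector `w⁰`
satisfying `Σ_k ∇J_k(w⁰) = 0`, i.e. `w⁰ = w*`, the minimizer of `J = Σ_k (1/K) J_k`. -/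
theorem fixed_point_optimality
    (K M : ℕ) (hK : 0 < K) (μ : ℝ) (hμ : 0 < μ)
    (A V : Matrix (Fin K) (Fin K) ℝ)
    (hsymm : A.IsSymm)
    (hnonneg : ∀ i j, 0 ≤ A i j)
    (hrow : A *ᵥ (1 : Fin K → ℝ) = 1)
    (hcol : (1 : Fin K → ℝ) ᵥ* A = 1)
    (hV : V.PosSemidef)
    (hVsq : V * V = ((1 : ℝ) / (2 * K)) • ((1 : Matrix (Fin K) (Fin K) ℝ) - A))
    (hlam : Module.End.eigenspace (Matrix.toLin' A) 1
        = Submodule.span ℝ {(1 : Fin K → ℝ)})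
    (J : Fin K → EuclideanSpace ℝ (Fin M) → ℝ)
    (hdiff : ∀ k, Differentiable ℝ (J k))
    (hconv : ∀ k, ConvexOn ℝ Set.univ (J k))
    (hstrict : StrictConvexOn ℝ Set.univ (fun w => ∑ k, (1 / K : ℝ) * J k w))
    (wstar : EuclideanSpace ℝ (Fin M))
    (hmin : IsMinOn (fun w => ∑ k, (1 / K : ℝ) * J k w) Set.univ wstar)
    (W Y : Fin K → EuclideanSpace ℝ (Fin M))
    (hY : ∃ Z : Fin K → EuclideanSpace ℝ (Fin M), ∀ i, Y i = ∑ k, V i k • Z k)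
    (hopt1 : ∀ i, μ • (∑ k, (((1 : ℝ) / 2) • ((1 : Matrix (Fin K) (Fin K) ℝ) + A)) i k
          • gradient (J k) (W k))
        + (K : ℝ) • (∑ k, V i k • Y k) = 0)
    (hopt2 : ∀ i, (∑ k, V i k • W k) = 0) :
    ∃ w₀ : EuclideanSpace ℝ (Fin M),
      (∀ k, W k = w₀) ∧ (∑ k, gradient (J k) w₀) = 0 ∧ w₀ = wstar := by
  have hKR : (0:ℝ) < K := by exact_mod_cast hK
  have hc : ((1 : ℝ) / (2 * K)) ≠ 0 := by positivity
  have i0 : Fin K := ⟨0, hK⟩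
  -- symmetry of V
  have hVt : Vᵀ = V := by
    have := hV.1
    simpa [Matrix.IsHermitian, Matrix.conjTranspose_eq_transpose_of_trivial] using this
  -- V annihilates the all-ones vector
  have hVV1 : V *ᵥ (V *ᵥ (1 : Fin K → ℝ)) = 0 := by
    rw [mulVec_mulVec, hVsq, smul_mulVec, sub_mulVec, one_mulVec, hrow,
      sub_self, smul_zero]
  have hV1 : V *ᵥ (1 : Fin K → ℝ) = 0 := by
    have h1 : (1 : Fin K → ℝ) ᵥ* V = V *ᵥ (1 : Fin K → ℝ) := by
      conv_lhs => rw [← hVt]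
      rw [vecMul_transpose]
    have h2 : (V *ᵥ (1 : Fin K → ℝ)) ⬝ᵥ (V *ᵥ (1 : Fin K → ℝ)) = 0 := by
      calc (V *ᵥ (1 : Fin K → ℝ)) ⬝ᵥ (V *ᵥ (1 : Fin K → ℝ))
          = ((1 : Fin K → ℝ) ᵥ* V) ⬝ᵥ (V *ᵥ (1 : Fin K → ℝ)) := by rw [h1]
        _ = (1 : Fin K → ℝ) ⬝ᵥ (V *ᵥ (V *ᵥ (1 : Fin K → ℝ))) :=
            (dotProduct_mulVec _ _ _).symm
        _ = (1 : Fin K → ℝ) ⬝ᵥ (0 : Fin K → ℝ) := by rw [hVV1]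
        _ = 0 := dotProduct_zero _
    exact dotProduct_self_eq_zero.mp h2
  -- column sums of V vanish
  have hVcol : ∀ k, ∑ i, V i k = 0 := by
    intro k
    have h := congrFun hV1 k
    have : ∑ j, V k j * 1 = 0 := by simpa [Matrix.mulVec, dotProduct] using h
    calc ∑ i, V i k = ∑ i, V k i := by
          refine Finset.sum_congr rfl fun i _ => ?_
          have := congrFun (congrFun hVt k) i
          simpa [Matrix.transpose_apply] using this
      _ = 0 := by simpa using this
  -- column sums of A equal 1
  have hAcol : ∀ k, ∑ i, A i k = 1 := by
    intro k
    have h := congrFun hcol k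
    simpa [Matrix.vecMul, dotProduct] using h
  -- W is consensual
  have hWc : ∀ i, W i = W i0 := by
    intro i
    ext m
    set w : Fin K → ℝ := fun j => W j m with hw
    have hVw : V *ᵥ w = 0 := by
      funext i'
      have h := congrArg (fun v => EuclideanSpace.proj m v) (hopt2 i')
      simpa [map_sum, Matrix.mulVec, dotProduct, hw] using h
    have hIA : (((1 : ℝ) / (2 * K)) • ((1 : Matrix (Fin K) (Fin K) ℝ) - A)) *ᵥ w = 0 := by
      rw [← hVsq, ← mulVec_mulVec, hVw, mulVec_zero]
    have hAw : A *ᵥ w = w := by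
      rw [smul_mulVec, sub_mulVec, one_mulVec] at hIA
      have h2 : w - A *ᵥ w = 0 := by
        rcases smul_eq_zero.mp hIA with h | h
        · exact absurd h hc
        · exact h
      have := sub_eq_zero.mp h2
      exact this.symm
    have hmem : w ∈ Module.End.eigenspace (Matrix.toLin' A) 1 := by
      rw [Module.End.mem_eigenspace_iff]
      simpa [Matrix.toLin'_apply] using hAw
    rw [hlam] at hmem
    obtain ⟨c, hcw⟩ := Submodule.mem_span_singleton.mp hmem
    have h1 : w i = c := by rw [← hcw]; simp
    have h2 : w i0 = c := by rw [← hcw]; simp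
    exact h1.trans h2.symm
  set w₀ : EuclideanSpace ℝ (Fin M) := W i0 with hw₀
  -- sum the first optimality condition over i
  have hgsum : (∑ k, gradient (J k) w₀) = 0 := by
    set g : Fin K → EuclideanSpace ℝ (Fin M) := fun k => gradient (J k) (W k) with hg
    have H : (∑ i, (μ • (∑ k, (((1 : ℝ) / 2) • ((1 : Matrix (Fin K) (Fin K) ℝ) + A)) i k • g k)
        + (K : ℝ) • (∑ k, V i k • Y k))) = 0 :=
      Finset.sum_eq_zero fun i _ => hopt1 i
    rw [Finset.sum_add_distrib] at H
    have e1 : (∑ i, μ • (∑ k, (((1 : ℝ) / 2) • ((1 : Matrix (Fin K) (Fin K) ℝ) + A)) i k • g k))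
        = μ • ∑ k, g k := by
      rw [← Finset.smul_sum, Finset.sum_comm]
      congr 1
      refine Finset.sum_congr rfl fun k _ => ?_
      rw [← Finset.sum_smul]
      have : (∑ i, (((1 : ℝ) / 2) • ((1 : Matrix (Fin K) (Fin K) ℝ) + A)) i k) = 1 := by
        simp only [Matrix.smul_apply, Matrix.add_apply, Matrix.one_apply, smul_eq_mul]
        rw [← Finset.mul_sum, Finset.sum_add_distrib, hAcol k]
        simp [Finset.sum_ite_eq, if_pos (Finset.mem_univ k)]
        ring
      rw [this, one_smul]
    have e2 : (∑ i, (K : ℝ) • (∑ k, V i k • Y k)) = 0 := by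
      rw [← Finset.smul_sum, Finset.sum_comm]
      have : (∑ k, ∑ i, V i k • Y k) = 0 := by
        refine Finset.sum_eq_zero fun k _ => ?_
        rw [← Finset.sum_smul, hVcol k, zero_smul]
      rw [this, smul_zero]
    rw [e1, e2, add_zero] at H
    have hsg : (∑ k, g k) = 0 := by
      rcases smul_eq_zero.mp H with h | h
      · exact absurd h (ne_of_gt hμ)
      · exact h
    calc (∑ k, gradient (J k) w₀) = ∑ k, g k := by
          refine Finset.sum_congr rfl fun k _ => ?_
          simp only [hg]
          rw [hWc k]
      _ = 0 := hsg
  refine ⟨w₀, hWc, hgsum, ?_⟩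
  -- w₀ minimizes the averaged objective since its gradient there vanishes
  set f : EuclideanSpace ℝ (Fin M) → ℝ := fun w => ∑ k, (1 / K : ℝ) * J k w with hf
  have hk : ∀ k, HasFDerivAt (J k)
      (InnerProductSpace.toDual ℝ (EuclideanSpace ℝ (Fin M)) (gradient (J k) w₀)) w₀ :=
    fun k => hasGradientAt_iff_hasFDerivAt.mp ((hdiff k w₀).hasGradientAt)
  have hsum : HasFDerivAt f
      (∑ k, (1 / K : ℝ) • (InnerProductSpace.toDual ℝ (EuclideanSpace ℝ (Fin M))
        (gradient (J k) w₀))) w₀ :=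
    HasFDerivAt.fun_sum fun k _ => (hk k).const_mul _
  have hzero : (∑ k, (1 / K : ℝ) • (InnerProductSpace.toDual ℝ (EuclideanSpace ℝ (Fin M))
      (gradient (J k) w₀))) = 0 := by
    have : (∑ k, (1 / K : ℝ) • (InnerProductSpace.toDual ℝ (EuclideanSpace ℝ (Fin M))
        (gradient (J k) w₀)))
        = InnerProductSpace.toDual ℝ (EuclideanSpace ℝ (Fin M))
          ((1 / K : ℝ) • ∑ k, gradient (J k) w₀) := by
      rw [_root_.map_smul, map_sum, Finset.smul_sum]
    rw [this, hgsum, smul_zero, map_zero]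
  rw [hzero] at hsum
  have hfconv : ConvexOn ℝ Set.univ f := by
    have h : ∀ (s : Finset (Fin K)),
        ConvexOn ℝ (Set.univ : Set (EuclideanSpace ℝ (Fin M)))
          (fun w => ∑ k ∈ s, (1 / K : ℝ) * J k w) := by
      intro s
      induction s using Finset.induction with
      | empty => simpa using convexOn_const (0:ℝ) convex_univ
      | @insert a s ha ih =>
          have h1 : ConvexOn ℝ (Set.univ : Set (EuclideanSpace ℝ (Fin M)))
              (fun w => (1 / K : ℝ) * J a w) := by
            have := (hconv a).smul (by positivity : (0:ℝ) ≤ 1 / K)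
            simpa [smul_eq_mul] using this
          have := h1.add ih
          simpa [Finset.sum_insert ha, Pi.add_def] using this
    simpa [hf] using h Finset.univ
  have hmin₀ : IsMinOn f Set.univ w₀ := convexOn_isMinOn_of_hasFDerivAt_zero hfconv hsum
  exact hstrict.eq_of_isMinOn hmin₀ hmin (Set.mem_univ _) (Set.mem_univ _)
end

section
/- Let Q(·; x_n) : ℝ^M → ℝ for n = 1,...,N each have δ-Lipschitz gradient, let σ be a permutation of {1,...,N}, and define for vectors w_i, w₀, and previous-epoch iterates v₀,...,v_{N-1}, v_N with previous permutation τ: s = ∇Q(w_i; x_{σ(i+1)}) - ∇Q(w₀; x_{σ(i+1)}) + (1/N)Σ_{j=0}^{N-1} ∇Q(v_j; x_{τ(j+1)}) - ∇J(w_i), where J(w) = (1/N)Σ_n Q(w; x_n) and w₀ = v_N. Then ‖s‖² ≤ 6δ²‖w_i - w₀‖² + (3δ²/N) Σ_{j=0}^{N-1} ‖v_j - v_N‖². -/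
open scoped BigOperators

section Aux

variable {M : ℕ}

lemma gradient_avg {N : ℕ} (Q : Fin N → EuclideanSpace ℝ (Fin M) → ℝ)
    (hdiff : ∀ n, Differentiable ℝ (Q n)) (x : EuclideanSpace ℝ (Fin M)) :
    gradient (fun w => (1 / N : ℝ) * ∑ n, Q n w) x
      = (1 / N : ℝ) • ∑ n, gradient (Q n) x := by
  have h : HasGradientAt (fun w => (1 / N : ℝ) * ∑ n, Q n w)
      ((1 / N : ℝ) • ∑ n, gradient (Q n) x) x := by
    rw [hasGradientAt_iff_hasFDerivAt]
    have h1 : ∀ n : Fin N, HasFDerivAt (Q n)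
        (InnerProductSpace.toDual ℝ _ (gradient (Q n) x)) x := fun n => by
      have := (hdiff n x).hasGradientAt
      rwa [hasGradientAt_iff_hasFDerivAt] at this
    have hsum : HasFDerivAt (fun w => ∑ n, Q n w)
        (∑ n, InnerProductSpace.toDual ℝ _ (gradient (Q n) x)) x :=
      HasFDerivAt.fun_sum (fun n _ => h1 n)
    have := hsum.const_mul (1 / N : ℝ)
    convert this using 1
    rfl
    simp [map_smul, map_sum, Finset.smul_sum]
  exact h.gradient

lemma norm_add3_sq_le {F : Type*} [NormedAddCommGroup F] [InnerProductSpace ℝ F]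
    (a b c : F) : ‖a + b + c‖ ^ 2 ≤ 3 * (‖a‖ ^ 2 + ‖b‖ ^ 2 + ‖c‖ ^ 2) := by
  have h1 : ‖a + b + c‖ ≤ ‖a‖ + ‖b‖ + ‖c‖ :=
    (norm_add_le _ _).trans (by gcongr; exact norm_add_le _ _)
  nlinarith [norm_nonneg (a + b + c), norm_nonneg a, norm_nonneg b, norm_nonneg c,
    sq_nonneg (‖a‖ - ‖b‖), sq_nonneg (‖a‖ - ‖c‖), sq_nonneg (‖b‖ - ‖c‖)]

end Aux

set_option maxHeartbeats 1000000 in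
/-- AVRG gradient-noise bound: with `δ`-Lipschitz gradients, a current permutation `σ`,
a previous permutation `τ` with previous-epoch iterates `v₀, ..., v_{N-1}` and
`v_N = w₀`, the gradient noise
`s = ∇Q(w_i; x_{σ(i)}) - ∇Q(w₀; x_{σ(i)}) + (1/N)Σ_j ∇Q(v_j; x_{τ(j)}) - ∇J(w_i)`
satisfies `‖s‖² ≤ 6δ²‖w_i - w₀‖² + (3δ²/N)Σ_j ‖v_j - v_N‖²`. -/
theorem avrg_gradient_noise_bound
    (N M : ℕ) (hN : 0 < N) (δ : ℝ) (hδ : 0 ≤ δ)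
    (Q : Fin N → EuclideanSpace ℝ (Fin M) → ℝ)
    (hdiff : ∀ n, Differentiable ℝ (Q n))
    (hlip : ∀ n (w₁ w₂ : EuclideanSpace ℝ (Fin M)),
      ‖gradient (Q n) w₁ - gradient (Q n) w₂‖ ≤ δ * ‖w₁ - w₂‖)
    (σ τ : Equiv.Perm (Fin N)) (i : Fin N)
    (wi w₀ : EuclideanSpace ℝ (Fin M))
    (v : Fin N → EuclideanSpace ℝ (Fin M)) (vN : EuclideanSpace ℝ (Fin M))
    (hvN : vN = w₀) :
    ‖gradient (Q (σ i)) wi - gradient (Q (σ i)) w₀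
        + (1 / N : ℝ) • (∑ j : Fin N, gradient (Q (τ j)) (v j))
        - gradient (fun w => (1 / N : ℝ) * ∑ n, Q n w) wi‖ ^ 2
      ≤ 6 * δ ^ 2 * ‖wi - w₀‖ ^ 2
        + (3 * δ ^ 2 / N) * ∑ j : Fin N, ‖v j - vN‖ ^ 2 := by
  rw [hvN]
  have hNR : (0 : ℝ) < N := by exact_mod_cast hN
  set a := gradient (Q (σ i)) wi - gradient (Q (σ i)) w₀ with ha
  set c := (1 / N : ℝ) • ∑ j : Fin N, (gradient (Q (τ j)) (v j) - gradient (Q (τ j)) w₀)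
    with hc
  set d := (1 / N : ℝ) • ∑ n : Fin N, (gradient (Q n) w₀ - gradient (Q n) wi) with hd
  have hperm : ∑ j : Fin N, gradient (Q (τ j)) w₀ = ∑ n : Fin N, gradient (Q n) w₀ :=
    Equiv.sum_comp τ (fun n => gradient (Q n) w₀)
  have hdecomp : gradient (Q (σ i)) wi - gradient (Q (σ i)) w₀
        + (1 / N : ℝ) • (∑ j : Fin N, gradient (Q (τ j)) (v j))
        - gradient (fun w => (1 / N : ℝ) * ∑ n, Q n w) wi = a + c + d := by
    rw [gradient_avg Q hdiff wi, ha, hc, hd]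
    rw [Finset.sum_sub_distrib, Finset.sum_sub_distrib, hperm, smul_sub, smul_sub]
    abel
  rw [hdecomp]
  have key := norm_add3_sq_le a c d
  have hA : ‖a‖ ^ 2 ≤ δ ^ 2 * ‖wi - w₀‖ ^ 2 := by
    have := hlip (σ i) wi w₀
    nlinarith [norm_nonneg a, norm_nonneg (wi - w₀)]
  have hD : ‖d‖ ^ 2 ≤ δ ^ 2 * ‖wi - w₀‖ ^ 2 := by
    have hd1 : ‖d‖ ≤ δ * ‖wi - w₀‖ := by
      rw [hd, norm_smul]
      have h1 : ‖∑ n : Fin N, (gradient (Q n) w₀ - gradient (Q n) wi)‖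
          ≤ ∑ n : Fin N, (δ * ‖wi - w₀‖) := by
        refine (norm_sum_le _ _).trans (Finset.sum_le_sum fun n _ => ?_)
        simpa [norm_sub_rev] using hlip n w₀ wi
      rw [Finset.sum_const, Finset.card_univ, Fintype.card_fin, nsmul_eq_mul] at h1
      calc ‖(1 / N : ℝ)‖ * ‖∑ n : Fin N, (gradient (Q n) w₀ - gradient (Q n) wi)‖
          ≤ ‖(1 / N : ℝ)‖ * (N * (δ * ‖wi - w₀‖)) :=
            mul_le_mul_of_nonneg_left h1 (norm_nonneg _)
        _ = δ * ‖wi - w₀‖ := by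
            rw [Real.norm_eq_abs, abs_of_pos (by positivity)]
            field_simp
    nlinarith [norm_nonneg d, norm_nonneg (wi - w₀)]
  have hC : ‖c‖ ^ 2 ≤ (δ ^ 2 / N) * ∑ j : Fin N, ‖v j - w₀‖ ^ 2 := by
    have h1 : ‖c‖ ≤ (1 / N : ℝ) * ∑ j : Fin N, (δ * ‖v j - w₀‖) := by
      rw [hc, norm_smul, Real.norm_eq_abs, abs_of_pos (by positivity)]
      gcongr
      exact (norm_sum_le _ _).trans (Finset.sum_le_sum fun j _ => hlip (τ j) (v j) w₀)
    have h2 : (∑ j : Fin N, (δ * ‖v j - w₀‖)) ^ 2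
        ≤ N * ∑ j : Fin N, (δ * ‖v j - w₀‖) ^ 2 := by
      have := sq_sum_le_card_mul_sum_sq (s := (Finset.univ : Finset (Fin N)))
        (f := fun j => δ * ‖v j - w₀‖)
      simpa using this
    have h3 : ‖c‖ ^ 2 ≤ ((1 / N : ℝ) * ∑ j : Fin N, (δ * ‖v j - w₀‖)) ^ 2 := by
      have hc0 : (0:ℝ) ≤ (1 / N : ℝ) * ∑ j : Fin N, (δ * ‖v j - w₀‖) := by positivity
      nlinarith [norm_nonneg c]
    calc ‖c‖ ^ 2 ≤ ((1 / N : ℝ)) ^ 2 * (∑ j : Fin N, (δ * ‖v j - w₀‖)) ^ 2 := by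
          rw [← mul_pow]; exact h3
      _ ≤ ((1 / N : ℝ)) ^ 2 * (N * ∑ j : Fin N, (δ * ‖v j - w₀‖) ^ 2) := by
          gcongr
      _ = (δ ^ 2 / N) * ∑ j : Fin N, ‖v j - w₀‖ ^ 2 := by
          rw [Finset.mul_sum, Finset.mul_sum, Finset.mul_sum]
          refine Finset.sum_congr rfl fun j _ => ?_
          field_simp
  have heq : (3:ℝ) * ((δ ^ 2 / N) * ∑ j : Fin N, ‖v j - w₀‖ ^ 2)
      = (3 * δ ^ 2 / N) * ∑ j : Fin N, ‖v j - w₀‖ ^ 2 := by ring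
  linarith
end
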